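/- Subharmonicity of the radius ratio: Let 𝒞 and 𝒞̃ be two immersed circle patterns for the same finite graph G and the same admissible labelling α : E(G) → (0,π), with radius functions r, r̃, and assume all kites of both patterns are convex. Define u(v) = r̃(v)/r(v) and the Laplacian Δu(v₀) = Σ_{[v₀,v]∈E} μ([v₀,v])·(u(v) − u(v₀)) with μ([v₀,v]) = 2 f'_{α([v₀,v])}(log r(v) − log r(v₀)). Then Δu(v₀) ≥ 0 at every interior vertex v₀. -/

import Mathlib

open Real Finset


lemma Dpos (θ t : ℝ) (h1 : 0 < θ) (h2 : θ < π) :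
    0 < exp t * exp t - 2 * exp t * cos θ + 1 := by
  have hs : 0 < sin θ := sin_pos_of_pos_of_lt_pi h1 h2
  nlinarith [sin_sq_add_cos_sq θ, sq_nonneg (exp t - cos θ)]

lemma cosh_eq_D (θ t : ℝ) :
    2 * (cosh t - cos θ) = (exp t * exp t - 2 * exp t * cos θ + 1) / exp t := by
  rw [Real.cosh_eq]
  have h := Real.exp_neg t
  have h2 := Real.exp_pos t
  field_simp [h]
  linear_combination (mul_inv_cancel₀ h2.ne' : rexp t * (rexp t)⁻¹ = 1) + rexp t * h

lemma fprime_eq (θ t : ℝ) :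
    sin θ / (2 * (cosh t - cos θ)) =
      exp t * (sin θ / (exp t * exp t - 2 * exp t * cos θ + 1)) := by
  rw [cosh_eq_D θ t, div_div_eq_mul_div]
  ring

lemma key (θ : ℝ) (hθ1 : 0 < θ) (hθ2 : θ < π) (f : ℝ → ℝ)
    (hf : ∀ x, HasDerivAt f (sin θ / (2 * (cosh x - cos θ))) x)
    (x y : ℝ) (hx : cos θ ≤ exp x) (hy : cos θ ≤ exp y) :
    f y - f x ≤ (sin θ / (2 * (cosh x - cos θ))) * (exp (y - x) - 1) := by
  have hs : 0 < sin θ := sin_pos_of_pos_of_lt_pi hθ1 hθ2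
  set D : ℝ → ℝ := fun t => exp t * exp t - 2 * exp t * cos θ + 1 with hD
  have hDpos : ∀ t, 0 < D t := fun t => Dpos θ t hθ1 hθ2
  set φ : ℝ → ℝ := fun t => sin θ / D t with hφ
  -- antitone of φ
  have hanti : ∀ s t : ℝ, s ≤ t → cos θ ≤ exp s → φ t ≤ φ s := by
    intro s t hst hcs
    have he : exp s ≤ exp t := exp_le_exp.2 hst
    have hDle : D s ≤ D t := by
      have : (exp t - exp s) * (exp t + exp s - 2 * cos θ) ≥ 0 := by
        apply mul_nonneg (by linarith)
        have := exp_le_exp.2 hst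
        linarith
      simp only [hD]; nlinarith
    exact div_le_div_of_nonneg_left hs.le (hDpos s) hDle
  set c : ℝ := sin θ / (2 * (cosh x - cos θ)) with hc
  have hcφ : c = exp x * φ x := fprime_eq θ x
  set g : ℝ → ℝ := fun t => f t - f x - c * (exp (t - x) - 1) with hg
  have hg' : ∀ t, HasDerivAt g (exp t * (φ t - φ x)) t := by
    intro t
    have h1 : HasDerivAt (fun t => exp (t - x)) (exp (t - x)) t := by
      exact (Real.hasDerivAt_exp (t - x)).comp_sub_const t x
    have h2 : HasDerivAt (fun t => c * (exp (t - x) - 1)) (c * exp (t - x)) t :=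
      ((h1.sub_const 1).const_mul c)
    have h3 := ((hf t).sub_const (f x)).sub h2
    refine h3.congr_deriv (Eq.symm ?_)
    have hex : Real.exp x * Real.exp (t - x) = Real.exp t := by
      rw [← Real.exp_add]; ring_nf
    rw [fprime_eq θ t, hcφ]
    linear_combination φ x * hex
  have hgx : g x = 0 := by simp [hg]
  have key2 : g y ≤ 0 := by
    rcases le_total x y with hxy | hxy
    · have : AntitoneOn g (Set.Icc x y) := by
        apply antitoneOn_of_deriv_nonpos (convex_Icc x y)
        · exact Continuous.continuousOn (by
            have : Differentiable ℝ g := fun t => (hg' t).differentiableAt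
            exact this.continuous)
        · intro t ht
          exact (hg' t).differentiableAt.differentiableWithinAt
        · intro t ht
          rw [(hg' t).deriv]
          rw [interior_Icc] at ht
          have : φ t ≤ φ x := hanti x t ht.1.le hx
          have := Real.exp_pos t
          nlinarith
      have := this (Set.left_mem_Icc.2 hxy) (Set.right_mem_Icc.2 hxy) hxy
      linarith [hgx ▸ this]
    · have : MonotoneOn g (Set.Icc y x) := by
        apply monotoneOn_of_deriv_nonneg (convex_Icc y x)
        · exact Continuous.continuousOn (by
            have : Differentiable ℝ g := fun t => (hg' t).differentiableAt
            exact this.continuous)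
        · intro t ht
          exact (hg' t).differentiableAt.differentiableWithinAt
        · intro t ht
          rw [(hg' t).deriv]
          rw [interior_Icc] at ht
          have hct : cos θ ≤ exp t := le_trans hy (exp_le_exp.2 ht.1.le)
          have : φ x ≤ φ t := hanti t x ht.2.le hct
          have := Real.exp_pos t
          nlinarith
      have := this (Set.left_mem_Icc.2 hxy) (Set.right_mem_Icc.2 hxy) hxy
      linarith [hgx ▸ this]
  simpa [hg] using key2

/-- **subharmonicity of the radius ratio.**
Let `𝒞`, `𝒞̃` be two immersed circle patterns for the same finite graph `G` and admissible
labelling `α : E(G) → (0,π)` (so both radius functions satisfy the closing condition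
`Σ f_α(log r(v) − log r(v₀)) = π` at interior vertices, where `f_θ' (x) =
sin θ/(2(cosh x − cos θ))`), with all kites convex (`r(v)/r(v₀) ≥ cos α` and likewise
for `r̃`).  Then `u = r̃/r` satisfies `Δu(v₀) ≥ 0` at every interior vertex, where
`Δu(v₀) = Σ μ([v₀,v])(u(v) − u(v₀))` with
`μ([v₀,v]) = 2 f_α'(log r(v) − log r(v₀)) = sin α/(cosh(log r(v) − log r(v₀)) − cos α)`. -/
theorem radius_ratio_subharmonic
    {V : Type*} [Fintype V] (G : SimpleGraph V) [DecidableRel G.Adj]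
    (boundary : Set V)
    (α : V → V → ℝ) (hαsymm : ∀ u v, α u v = α v u)
    (hα : ∀ u v, G.Adj u v → α u v ∈ Set.Ioo 0 Real.pi)
    (f : ℝ → ℝ → ℝ)
    (hf : ∀ θ ∈ Set.Ioo 0 Real.pi, ∀ x : ℝ,
      HasDerivAt (f θ) (Real.sin θ / (2 * (Real.cosh x - Real.cos θ))) x)
    (r rt : V → ℝ) (hr : ∀ v, 0 < r v) (hrt : ∀ v, 0 < rt v)
    (hclose : ∀ v₀, v₀ ∉ boundary →
      ∑ v ∈ G.neighborFinset v₀, f (α v₀ v) (Real.log (r v) - Real.log (r v₀)) = Real.pi)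
    (hcloset : ∀ v₀, v₀ ∉ boundary →
      ∑ v ∈ G.neighborFinset v₀, f (α v₀ v) (Real.log (rt v) - Real.log (rt v₀)) = Real.pi)
    (hconvex : ∀ u v, G.Adj u v → Real.cos (α u v) ≤ r v / r u)
    (hconvext : ∀ u v, G.Adj u v → Real.cos (α u v) ≤ rt v / rt u) :
    ∀ v₀, v₀ ∉ boundary →
      0 ≤ ∑ v ∈ G.neighborFinset v₀,
        (Real.sin (α v₀ v) /
            (Real.cosh (Real.log (r v) - Real.log (r v₀)) - Real.cos (α v₀ v))) *
          (rt v / r v - rt v₀ / r v₀) := by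
  intro v₀ hv₀
  have hu0 : 0 < rt v₀ / r v₀ := div_pos (hrt v₀) (hr v₀)
  have hstep : ∀ v ∈ G.neighborFinset v₀,
      2 * (rt v₀ / r v₀) *
        (f (α v₀ v) (Real.log (rt v) - Real.log (rt v₀)) -
          f (α v₀ v) (Real.log (r v) - Real.log (r v₀))) ≤
      (Real.sin (α v₀ v) /
          (Real.cosh (Real.log (r v) - Real.log (r v₀)) - Real.cos (α v₀ v))) *
        (rt v / r v - rt v₀ / r v₀) := by
    intro v hv
    rw [SimpleGraph.mem_neighborFinset] at hv
    obtain ⟨hθ1, hθ2⟩ := hα v₀ v hv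
    set x := Real.log (r v) - Real.log (r v₀) with hxdef
    set y := Real.log (rt v) - Real.log (rt v₀) with hydef
    have hex : Real.exp x = r v / r v₀ := by
      rw [hxdef, Real.exp_sub, Real.exp_log (hr v), Real.exp_log (hr v₀)]
    have hey : Real.exp y = rt v / rt v₀ := by
      rw [hydef, Real.exp_sub, Real.exp_log (hrt v), Real.exp_log (hrt v₀)]
    have hcx : Real.cos (α v₀ v) ≤ Real.exp x := hex ▸ hconvex v₀ v hv
    have hcy : Real.cos (α v₀ v) ≤ Real.exp y := hey ▸ hconvext v₀ v hv
    have hkey := key (α v₀ v) hθ1 hθ2 (f (α v₀ v))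
      (hf (α v₀ v) ⟨hθ1, hθ2⟩) x y hcx hcy
    -- rewrite the target term
    have hn1 := (hr v).ne'
    have hn2 := (hr v₀).ne'
    have hn3 := (hrt v).ne'
    have hn4 := (hrt v₀).ne'
    have hratio : rt v / r v - rt v₀ / r v₀ = (rt v₀ / r v₀) * (Real.exp (y - x) - 1) := by
      rw [Real.exp_sub, hex, hey]
      field_simp
    have hsinpos := Real.sin_pos_of_pos_of_lt_pi hθ1 hθ2
    have hDpos : 0 < Real.cosh x - Real.cos (α v₀ v) := by
      have h1 : Real.cos (α v₀ v) < 1 := by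
        nlinarith [Real.sin_sq_add_cos_sq (α v₀ v), Real.cos_le_one (α v₀ v)]
      nlinarith [Real.one_le_cosh x]
    rw [hratio]
    have h2 : 2 * (rt v₀ / r v₀) *
        (f (α v₀ v) y - f (α v₀ v) x) ≤ 2 * (rt v₀ / r v₀) *
        ((Real.sin (α v₀ v) / (2 * (Real.cosh x - Real.cos (α v₀ v)))) * (Real.exp (y - x) - 1)) := by
      apply mul_le_mul_of_nonneg_left hkey
      positivity
    calc 2 * (rt v₀ / r v₀) * (f (α v₀ v) y - f (α v₀ v) x)
        ≤ 2 * (rt v₀ / r v₀) *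
          ((Real.sin (α v₀ v) / (2 * (Real.cosh x - Real.cos (α v₀ v)))) * (Real.exp (y - x) - 1)) := h2
      _ = (Real.sin (α v₀ v) / (Real.cosh x - Real.cos (α v₀ v))) *
          ((rt v₀ / r v₀) * (Real.exp (y - x) - 1)) := by
          field_simp
  have hsum := Finset.sum_le_sum hstep
  have hzero : ∑ v ∈ G.neighborFinset v₀,
      2 * (rt v₀ / r v₀) *
        (f (α v₀ v) (Real.log (rt v) - Real.log (rt v₀)) -
          f (α v₀ v) (Real.log (r v) - Real.log (r v₀))) = 0 := by
    simp only [mul_sub]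
    rw [Finset.sum_sub_distrib, ← Finset.mul_sum, ← Finset.mul_sum,
      hclose v₀ hv₀, hcloset v₀ hv₀]
    ring
  linarith [hzero ▸ hsum]
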